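/- If A = (A_1,…,A_n) is a doubly stochastic n-tuple of positive semidefinite hermitian matrices, then its mixed discriminant is strictly positive: D(A_1,…,A_n) > 0. -/

import Mathlib

open Matrix BigOperators Finset ComplexOrder Nat

/-- The mixed discriminant of an `n`-tuple of complex `n × n` matrices:
`D(A₁,…,Aₙ) = Σ_{σ,τ ∈ Sₙ} sgn(στ) Π_i A_i (σ i) (τ i)`. -/
noncomputable def mixedDisc {n : ℕ} (A : Fin n → Matrix (Fin n) (Fin n) ℂ) : ℂ :=
  ∑ σ : Equiv.Perm (Fin n), ∑ τ : Equiv.Perm (Fin n),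
    ((Equiv.Perm.sign (σ * τ) : ℤ) : ℂ) * ∏ i : Fin n, A i (σ i) (τ i)

/-- An `n`-tuple of hermitian matrices is doubly stochastic if each `A i` is positive
semidefinite, each has trace `1`, and they sum to the identity. -/
def DoublyStochasticTuple {n : ℕ} (A : Fin n → Matrix (Fin n) (Fin n) ℂ) : Prop :=
  (∀ i, (A i).PosSemidef) ∧ (∀ i, (A i).trace = 1) ∧ ∑ i, A i = 1

section Rado

open Submodule Module

/-- **Rado's theorem** for vector spaces: if finite sets `f i` of vectors satisfy the Hall-type
rank condition, then there is a linearly independent transversal. -/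
theorem rado_aux {K V : Type*} [Field K] [AddCommGroup V] [Module K V]
    [FiniteDimensional K V] [DecidableEq V] {ι : Type*} [Fintype ι] [DecidableEq ι]
    (N : ℕ) (f : ι → Finset V) (hN : ∑ i, (f i).card ≤ N)
    (h : ∀ S : Finset ι, S.card ≤ finrank K (span K ((S.biUnion f : Finset V) : Set V))) :
    ∃ g : ι → V, (∀ i, g i ∈ f i) ∧ LinearIndependent K g := by
  induction N generalizing f with
  | zero =>
    cases isEmpty_or_nonempty ι with
    | inl hι => exact ⟨fun i => isEmptyElim i, fun i => isEmptyElim i, linearIndependent_empty_type⟩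
    | inr hι =>
      exfalso
      obtain ⟨i⟩ := hι
      have h1 := h {i}
      have hfi : f i = ∅ := by
        have := Finset.sum_eq_zero_iff.mp (Nat.le_zero.mp hN) i (mem_univ i)
        exact Finset.card_eq_zero.mp this
      simp [hfi] at h1
  | succ N IH =>
    by_cases hsing : ∀ i, (f i).card ≤ 1
    · -- all singletons
      have hcard : ∀ i, (f i).card = 1 := by
        intro i
        have h1 := h {i}
        rcases Nat.lt_or_ge (f i).card 1 with hlt | hge
        · exfalso
          have : f i = ∅ := Finset.card_eq_zero.mp (Nat.lt_one_iff.mp hlt)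
          simp [this] at h1
        · exact le_antisymm (hsing i) hge
      choose g hg using fun i => Finset.card_eq_one.mp (hcard i)
      have hmem : ∀ i, g i ∈ f i := fun i => by rw [hg i]; exact Finset.mem_singleton_self _
      refine ⟨g, hmem, ?_⟩
      rw [linearIndependent_iff_card_eq_finrank_span]
      have hrange : Set.range g = ((univ.biUnion f : Finset V) : Set V) := by
        ext v
        simp only [Set.mem_range, Finset.coe_biUnion, Finset.mem_coe, Set.mem_iUnion,
          Finset.mem_univ, Set.iUnion_true]
        constructor
        · rintro ⟨i, rfl⟩; exact ⟨i, hmem i⟩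
        · rintro ⟨i, hv⟩; rw [hg i, Finset.mem_singleton] at hv; exact ⟨i, hv.symm⟩
      have hle : Fintype.card ι ≤ (Set.range g).finrank K := by
        rw [Set.finrank, hrange]
        simpa using h univ
      have hge : (Set.range g).finrank K ≤ Fintype.card ι := by
        have h2 : Set.range g = ((univ.image g : Finset V) : Set V) := by simp
        rw [Set.finrank, h2]
        exact le_trans (finrank_span_finset_le_card _) (Finset.card_image_le.trans (by simp))
      exact le_antisymm hle hge
    · push_neg at hsing
      obtain ⟨i₀, hi₀⟩ := hsing
      obtain ⟨x, hx, y, hy, hxy⟩ := Finset.one_lt_card.mp hi₀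
      by_cases hgood : ∃ z ∈ f i₀, ∀ S : Finset ι, S.card ≤
          finrank K (span K ((S.biUnion (Function.update f i₀ ((f i₀).erase z)) : Finset V) : Set V))
      · obtain ⟨z, hz, hS⟩ := hgood
        have hcardlt : ∑ i, ((Function.update f i₀ ((f i₀).erase z)) i).card ≤ N := by
          have e1 : ∑ i, ((Function.update f i₀ ((f i₀).erase z)) i).card
              = ∑ i ∈ univ.erase i₀, (f i).card + ((f i₀).erase z).card := by
            rw [← Finset.sum_erase_add _ _ (mem_univ i₀), Function.update_self]
            congr 1
            apply Finset.sum_congr rfl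
            intro j hj
            rw [Function.update_of_ne (Finset.ne_of_mem_erase hj)]
          have e2 : ∑ i, (f i).card = ∑ i ∈ univ.erase i₀, (f i).card + (f i₀).card := by
            rw [← Finset.sum_erase_add _ _ (mem_univ i₀)]
          have e3 : ((f i₀).erase z).card = (f i₀).card - 1 := Finset.card_erase_of_mem hz
          have e4 : 0 < (f i₀).card := Finset.card_pos.mpr ⟨z, hz⟩
          omega
        obtain ⟨g, hg1, hg2⟩ := IH _ hcardlt hS
        refine ⟨g, fun i => ?_, hg2⟩
        rcases eq_or_ne i i₀ with rfl | hne
        · have := hg1 i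
          rw [Function.update_self] at this
          exact Finset.erase_subset _ _ this
        · have := hg1 i
          rwa [Function.update_of_ne hne] at this
      · push_neg at hgood
        exfalso
        obtain ⟨Sx, hSx⟩ := hgood x hx
        obtain ⟨Sy, hSy⟩ := hgood y hy
        set fx := Function.update f i₀ ((f i₀).erase x) with hfx
        set fy := Function.update f i₀ ((f i₀).erase y) with hfy
        have hi₀Sx : i₀ ∈ Sx := by
          by_contra hc
          have : Sx.biUnion fx = Sx.biUnion f := by
            apply Finset.biUnion_congr rfl
            intro j hj
            rw [hfx, Function.update_of_ne (by rintro rfl; exact hc hj)]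
          rw [this] at hSx
          exact absurd (h Sx) (not_le.mpr hSx)
        have hi₀Sy : i₀ ∈ Sy := by
          by_contra hc
          have : Sy.biUnion fy = Sy.biUnion f := by
            apply Finset.biUnion_congr rfl
            intro j hj
            rw [hfy, Function.update_of_ne (by rintro rfl; exact hc hj)]
          rw [this] at hSy
          exact absurd (h Sy) (not_le.mpr hSy)
        set S₀ := Sx.erase i₀ with hS₀
        set T₀ := Sy.erase i₀ with hT₀
        set P := span K ((Sx.biUnion fx : Finset V) : Set V) with hP
        set Q := span K ((Sy.biUnion fy : Finset V) : Set V) with hQ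
        have hPcard : finrank K P ≤ S₀.card := by
          have : finrank K P < Sx.card := hSx
          have h2 : Sx.card = S₀.card + 1 := by
            rw [hS₀, Finset.card_erase_of_mem hi₀Sx]
            have := Finset.card_pos.mpr ⟨i₀, hi₀Sx⟩
            omega
          omega
        have hQcard : finrank K Q ≤ T₀.card := by
          have : finrank K Q < Sy.card := hSy
          have h2 : Sy.card = T₀.card + 1 := by
            rw [hT₀, Finset.card_erase_of_mem hi₀Sy]
            have := Finset.card_pos.mpr ⟨i₀, hi₀Sy⟩
            omega
          omega
        have hbig : span K (((insert i₀ (S₀ ∪ T₀)).biUnion f : Finset V) : Set V) ≤ P ⊔ Q := by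
          rw [← Submodule.span_union]
          apply Submodule.span_mono
          intro v hv
          simp only [Finset.coe_biUnion, Finset.mem_coe, Set.mem_iUnion] at hv
          obtain ⟨j, hj, hvj⟩ := hv
          rcases Finset.mem_insert.mp hj with rfl | hj'
          · rcases eq_or_ne v x with rfl | hvx
            · right
              refine Finset.mem_coe.mpr (Finset.mem_biUnion.mpr ⟨j, hi₀Sy, ?_⟩)
              rw [hfy, Function.update_self]
              exact Finset.mem_erase.mpr ⟨hxy, hvj⟩
            · left
              refine Finset.mem_coe.mpr (Finset.mem_biUnion.mpr ⟨j, hi₀Sx, ?_⟩)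
              rw [hfx, Function.update_self]
              exact Finset.mem_erase.mpr ⟨hvx, hvj⟩
          · rcases Finset.mem_union.mp hj' with hjS | hjT
            · left
              have hjne : j ≠ i₀ := by rintro rfl; exact Finset.notMem_erase _ _ hjS
              refine Finset.mem_coe.mpr
                (Finset.mem_biUnion.mpr ⟨j, Finset.mem_of_mem_erase hjS, ?_⟩)
              rw [hfx, Function.update_of_ne hjne]; exact hvj
            · right
              have hjne : j ≠ i₀ := by rintro rfl; exact Finset.notMem_erase _ _ hjT
              refine Finset.mem_coe.mpr
                (Finset.mem_biUnion.mpr ⟨j, Finset.mem_of_mem_erase hjT, ?_⟩)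
              rw [hfy, Function.update_of_ne hjne]; exact hvj
        have hsmall : span K (((S₀ ∩ T₀).biUnion f : Finset V) : Set V) ≤ P ⊓ Q := by
          apply le_inf
          · apply Submodule.span_mono
            intro v hv
            simp only [Finset.coe_biUnion, Finset.mem_coe, Set.mem_iUnion] at hv ⊢
            obtain ⟨j, hj, hvj⟩ := hv
            have hjS := (Finset.mem_inter.mp hj).1
            have hjne : j ≠ i₀ := by rintro rfl; exact Finset.notMem_erase _ _ hjS
            exact ⟨j, Finset.mem_of_mem_erase hjS,
              by rw [hfx, Function.update_of_ne hjne]; exact hvj⟩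
          · apply Submodule.span_mono
            intro v hv
            simp only [Finset.coe_biUnion, Finset.mem_coe, Set.mem_iUnion] at hv ⊢
            obtain ⟨j, hj, hvj⟩ := hv
            have hjT := (Finset.mem_inter.mp hj).2
            have hjne : j ≠ i₀ := by rintro rfl; exact Finset.notMem_erase _ _ hjT
            exact ⟨j, Finset.mem_of_mem_erase hjT,
              by rw [hfy, Function.update_of_ne hjne]; exact hvj⟩
        have h1 : (insert i₀ (S₀ ∪ T₀)).card ≤ finrank K (P ⊔ Q : Submodule K V) :=
          le_trans (h _) (Submodule.finrank_mono hbig)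
        have h2 : (S₀ ∩ T₀).card ≤ finrank K (P ⊓ Q : Submodule K V) :=
          le_trans (h _) (Submodule.finrank_mono hsmall)
        have hsub : finrank K (P ⊔ Q : Submodule K V) + finrank K (P ⊓ Q : Submodule K V)
            = finrank K P + finrank K Q := Submodule.finrank_sup_add_finrank_inf_eq P Q
        have hins : (insert i₀ (S₀ ∪ T₀)).card = (S₀ ∪ T₀).card + 1 := by
          rw [Finset.card_insert_of_notMem]
          simp [hS₀, hT₀]
        have huv : (S₀ ∪ T₀).card + (S₀ ∩ T₀).card = S₀.card + T₀.card :=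
          Finset.card_union_add_card_inter _ _
        omega

end Rado

/-- Expansion of the mixed discriminant for a tuple of matrices given by rank-one sums. -/
theorem mixedDisc_expand {n : ℕ} (A : Fin n → Matrix (Fin n) (Fin n) ℂ)
    (c : Fin n → Fin n → ℝ) (v : Fin n → Fin n → Fin n → ℂ)
    (hA : ∀ i x y, A i x y = ∑ k, (c i k : ℂ) * v i k x * (starRingEnd ℂ) (v i k y)) :
    mixedDisc A = ∑ k : Fin n → Fin n,
      (∏ i, (c i (k i) : ℂ)) *
        ((Matrix.of fun x i => v i (k i) x).det *
          (starRingEnd ℂ) (Matrix.of fun x i => v i (k i) x).det) := by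
  have hdet : ∀ k : Fin n → Fin n, (Matrix.of fun x i => v i (k i) x).det
      = ∑ σ : Equiv.Perm (Fin n), ((Equiv.Perm.sign σ : ℤ) : ℂ) * ∏ i, v i (k i) (σ i) := by
    intro k
    rw [Matrix.det_apply']
    rfl
  have hdetc : ∀ k : Fin n → Fin n, (starRingEnd ℂ) (Matrix.of fun x i => v i (k i) x).det
      = ∑ τ : Equiv.Perm (Fin n), ((Equiv.Perm.sign τ : ℤ) : ℂ)
          * ∏ i, (starRingEnd ℂ) (v i (k i) (τ i)) := by
    intro k
    rw [hdet, map_sum]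
    refine Finset.sum_congr rfl fun τ _ => ?_
    rw [_root_.map_mul, map_prod]
    simp
  have key : ∀ σ τ : Equiv.Perm (Fin n),
      (∏ i, A i (σ i) (τ i)) = ∑ k : Fin n → Fin n,
        ∏ i, ((c i (k i) : ℂ) * v i (k i) (σ i) * (starRingEnd ℂ) (v i (k i) (τ i))) := by
    intro σ τ
    simp only [hA]
    rw [Finset.prod_univ_sum, Fintype.piFinset_univ]
  calc mixedDisc A
      = ∑ σ : Equiv.Perm (Fin n), ∑ τ : Equiv.Perm (Fin n), ∑ k : Fin n → Fin n,
          ((Equiv.Perm.sign σ : ℤ) : ℂ) * ((Equiv.Perm.sign τ : ℤ) : ℂ) *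
          ((∏ i, (c i (k i) : ℂ)) * (∏ i, v i (k i) (σ i)) *
            (∏ i, (starRingEnd ℂ) (v i (k i) (τ i)))) := by
        unfold mixedDisc
        refine Finset.sum_congr rfl fun σ _ => Finset.sum_congr rfl fun τ _ => ?_
        rw [key σ τ, Finset.mul_sum]
        refine Finset.sum_congr rfl fun k _ => ?_
        rw [Equiv.Perm.sign_mul, Finset.prod_mul_distrib, Finset.prod_mul_distrib]
        push_cast
        ring
    _ = ∑ k : Fin n → Fin n, ∑ σ : Equiv.Perm (Fin n), ∑ τ : Equiv.Perm (Fin n),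
          ((Equiv.Perm.sign σ : ℤ) : ℂ) * ((Equiv.Perm.sign τ : ℤ) : ℂ) *
          ((∏ i, (c i (k i) : ℂ)) * (∏ i, v i (k i) (σ i)) *
            (∏ i, (starRingEnd ℂ) (v i (k i) (τ i)))) := by
        rw [show (∑ σ : Equiv.Perm (Fin n), ∑ τ : Equiv.Perm (Fin n), ∑ k : Fin n → Fin n,
          ((Equiv.Perm.sign σ : ℤ) : ℂ) * ((Equiv.Perm.sign τ : ℤ) : ℂ) *
          ((∏ i, (c i (k i) : ℂ)) * (∏ i, v i (k i) (σ i)) *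
            (∏ i, (starRingEnd ℂ) (v i (k i) (τ i)))))
          = ∑ σ : Equiv.Perm (Fin n), ∑ k : Fin n → Fin n, ∑ τ : Equiv.Perm (Fin n),
          ((Equiv.Perm.sign σ : ℤ) : ℂ) * ((Equiv.Perm.sign τ : ℤ) : ℂ) *
          ((∏ i, (c i (k i) : ℂ)) * (∏ i, v i (k i) (σ i)) *
            (∏ i, (starRingEnd ℂ) (v i (k i) (τ i))))
          from Finset.sum_congr rfl fun σ _ => Finset.sum_comm]
        rw [Finset.sum_comm]
    _ = _ := by
        refine Finset.sum_congr rfl fun k _ => ?_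
        rw [hdetc k, hdet k, Finset.sum_mul_sum, Finset.mul_sum]
        refine Finset.sum_congr rfl fun σ _ => ?_
        rw [Finset.mul_sum]
        refine Finset.sum_congr rfl fun τ _ => ?_
        ring

/-- The mixed discriminant of a doubly stochastic tuple is strictly positive. -/
theorem mixedDisc_pos_of_doublyStochastic {n : ℕ}
    (A : Fin n → Matrix (Fin n) (Fin n) ℂ) (hA : DoublyStochasticTuple A) :
    (0 : ℂ) < mixedDisc A := by
  classical
  obtain ⟨hpsd, htr, hsum⟩ := hA
  have hherm : ∀ i, (A i).IsHermitian := fun i => (hpsd i).1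
  set c : Fin n → Fin n → ℝ := fun i k => (hherm i).eigenvalues k with hc
  set v : Fin n → Fin n → Fin n → ℂ :=
    fun i k j => ((hherm i).eigenvectorUnitary : Matrix (Fin n) (Fin n) ℂ) j k with hv
  have hcnn : ∀ i k, 0 ≤ c i k := fun i k => (hpsd i).eigenvalues_nonneg k
  have hAent : ∀ i x y, A i x y = ∑ k, (c i k : ℂ) * v i k x * (starRingEnd ℂ) (v i k y) := by
    intro i x y
    conv_lhs => rw [(hherm i).spectral_theorem, Unitary.conjStarAlgAut_apply]
    rw [Matrix.mul_apply]
    refine Finset.sum_congr rfl fun k _ => ?_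
    rw [Matrix.mul_diagonal]
    simp only [Matrix.star_apply, Function.comp_apply, RCLike.star_def, hc, hv,
      RCLike.ofReal_alg, smul_eq_mul, Complex.coe_algebraMap]
    ring
  -- the sets of eigenvectors with positive eigenvalue
  set f : Fin n → Finset (Fin n → ℂ) :=
    fun i => (univ.filter (fun k => c i k ≠ 0)).image (v i) with hf
  -- each A i *ᵥ x lies in the span of f i
  have hAv : ∀ i (x : Fin n → ℂ), A i *ᵥ x
      = ∑ k, ((c i k : ℂ) * (∑ y, (starRingEnd ℂ) (v i k y) * x y)) • v i k := by
    intro i x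
    funext j
    simp only [Matrix.mulVec, dotProduct, hAent, Finset.sum_apply, Pi.smul_apply,
      smul_eq_mul, Finset.sum_mul, Finset.mul_sum]
    rw [Finset.sum_comm]
    exact Finset.sum_congr rfl fun k _ => Finset.sum_congr rfl fun y _ => by ring
  have hAv_mem : ∀ i (x : Fin n → ℂ),
      A i *ᵥ x ∈ Submodule.span ℂ ((f i : Finset (Fin n → ℂ)) : Set (Fin n → ℂ)) := by
    intro i x
    rw [hAv]
    apply Submodule.sum_mem
    intro k _
    by_cases hck : c i k = 0
    · simp [hck]
    · refine Submodule.smul_mem _ _ (Submodule.subset_span ?_)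
      simp only [hf, Finset.coe_image, Set.mem_image, Finset.mem_coe, Finset.mem_filter,
        Finset.mem_univ, true_and]
      exact ⟨k, hck, rfl⟩
  -- sums of PSD matrices
  have psd_sum : ∀ (T : Finset (Fin n)), (∑ i ∈ T, A i).PosSemidef := fun T =>
    Finset.sum_induction A Matrix.PosSemidef (fun a b ha hb => ha.add hb)
      Matrix.PosSemidef.zero (fun i _ => hpsd i)
  have hsum_mulVec : ∀ (T : Finset (Fin n)) (x : Fin n → ℂ),
      (∑ i ∈ T, A i) *ᵥ x = ∑ i ∈ T, A i *ᵥ x := by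
    intro T x
    induction T using Finset.induction with
    | empty => simp
    | insert _ _ hni ih => rw [Finset.sum_insert hni, Finset.sum_insert hni, Matrix.add_mulVec, ih]
  -- the Rado rank condition
  have hrankcond : ∀ S : Finset (Fin n), S.card ≤
      Module.finrank ℂ (Submodule.span ℂ ((S.biUnion f : Finset (Fin n → ℂ)) : Set (Fin n → ℂ))) := by
    intro S
    set B : Matrix (Fin n) (Fin n) ℂ := ∑ i ∈ S, A i with hB
    have hBpsd : B.PosSemidef := psd_sum S
    have hBherm : B.IsHermitian := hBpsd.1
    have hIB : ((1 : Matrix (Fin n) (Fin n) ℂ) - B).PosSemidef := by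
      have he : (1 : Matrix (Fin n) (Fin n) ℂ) - B = ∑ i ∈ Sᶜ, A i := by
        rw [← hsum, hB, ← Finset.sum_add_sum_compl S A]
        abel
      rw [he]
      exact psd_sum _
    -- eigenvalues of B are at most 1
    have hnorm1 : ∀ j, dotProduct (star (⇑(hBherm.eigenvectorBasis j)))
        (⇑(hBherm.eigenvectorBasis j)) = 1 := by
      intro j
      have h1 := EuclideanSpace.inner_eq_star_dotProduct
        (hBherm.eigenvectorBasis j) (hBherm.eigenvectorBasis j)
      rw [inner_self_eq_norm_sq_to_K, hBherm.eigenvectorBasis.orthonormal.1 j] at h1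
      simpa [dotProduct_comm] using h1.symm
    have heig_le : ∀ j, hBherm.eigenvalues j ≤ 1 := by
      intro j
      have h0 := hIB.re_dotProduct_nonneg (⇑(hBherm.eigenvectorBasis j))
      rw [Matrix.sub_mulVec, Matrix.one_mulVec, dotProduct_sub, map_sub, hnorm1 j,
        ← hBherm.eigenvalues_eq j] at h0
      have : RCLike.re (1 : ℂ) = (1 : ℝ) := by simp
      rw [this] at h0
      linarith
    -- trace computations
    have htrB : B.trace = ((S.card : ℝ) : ℂ) := by
      rw [hB, Matrix.trace_sum, Finset.sum_congr rfl (fun i _ => htr i)]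
      simp
    have htr_eig : B.trace = ((∑ j, hBherm.eigenvalues j : ℝ) : ℂ) := by
      conv_lhs => rw [hBherm.spectral_theorem, Unitary.conjStarAlgAut_apply]
      rw [Matrix.trace_mul_cycle,
        Unitary.coe_star_mul_self hBherm.eigenvectorUnitary, one_mul, Matrix.trace_diagonal]
      push_cast
      rfl
    have hcard_eq : (S.card : ℝ) = ∑ j, hBherm.eigenvalues j := by
      have := htrB.symm.trans htr_eig
      exact_mod_cast this
    -- S.card ≤ rank B
    have hrankB : S.card ≤ B.rank := by
      have h1 : (S.card : ℝ) ≤ ((univ.filter fun j => hBherm.eigenvalues j ≠ 0).card : ℝ) := by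
        rw [hcard_eq, ← Finset.sum_filter_ne_zero]
        calc ∑ j ∈ univ.filter fun j => hBherm.eigenvalues j ≠ 0, hBherm.eigenvalues j
            ≤ ∑ j ∈ univ.filter fun j => hBherm.eigenvalues j ≠ 0, (1 : ℝ) :=
              Finset.sum_le_sum fun j _ => heig_le j
          _ = _ := by simp
      have h2 : B.rank = (univ.filter fun j => hBherm.eigenvalues j ≠ 0).card := by
        rw [hBherm.rank_eq_card_non_zero_eigs, Fintype.card_subtype]
      rw [h2]
      exact_mod_cast h1
    -- rank B ≤ finrank of the span
    have hrange : LinearMap.range B.mulVecLin ≤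
        Submodule.span ℂ ((S.biUnion f : Finset (Fin n → ℂ)) : Set (Fin n → ℂ)) := by
      rintro y ⟨x, rfl⟩
      rw [Matrix.mulVecLin_apply, hB, hsum_mulVec]
      apply Submodule.sum_mem
      intro i hi
      refine Submodule.span_mono ?_ (hAv_mem i x)
      intro w hw
      simp only [Finset.coe_biUnion, Finset.mem_coe, Set.mem_iUnion]
      exact ⟨i, hi, hw⟩
    have hrk : B.rank ≤ Module.finrank ℂ
        (Submodule.span ℂ ((S.biUnion f : Finset (Fin n → ℂ)) : Set (Fin n → ℂ))) := by
      rw [Matrix.rank]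
      exact Submodule.finrank_mono hrange
    exact le_trans hrankB hrk
  -- apply Rado's theorem
  obtain ⟨g, hg, hgind⟩ := rado_aux (∑ i, (f i).card) f le_rfl hrankcond
  have hk : ∀ i, ∃ k, c i k ≠ 0 ∧ v i k = g i := by
    intro i
    have := hg i
    simp only [hf, Finset.mem_image, Finset.mem_filter, Finset.mem_univ, true_and] at this
    obtain ⟨k, hk1, hk2⟩ := this
    exact ⟨k, hk1, hk2⟩
  choose k hk1 hk2 using hk
  -- the expansion
  rw [mixedDisc_expand A c v hAent]
  -- convert to a real sum
  have hterm : ∀ k' : Fin n → Fin n,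
      (∏ i, (c i (k' i) : ℂ)) *
        ((Matrix.of fun x i => v i (k' i) x).det *
          (starRingEnd ℂ) (Matrix.of fun x i => v i (k' i) x).det)
      = (((∏ i, c i (k' i)) * Complex.normSq (Matrix.of fun x i => v i (k' i) x).det : ℝ) : ℂ) := by
    intro k'
    rw [Complex.mul_conj]
    push_cast
    ring
  rw [Finset.sum_congr rfl fun k' _ => hterm k', ← Complex.ofReal_sum]
  rw [Complex.zero_lt_real]
  apply Finset.sum_pos'
  · intro k' _
    apply mul_nonneg
    · exact Finset.prod_nonneg fun i _ => hcnn i (k' i)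
    · exact Complex.normSq_nonneg _
  · refine ⟨k, Finset.mem_univ _, ?_⟩
    apply mul_pos
    · exact Finset.prod_pos fun i _ => lt_of_le_of_ne (hcnn i (k i)) (Ne.symm (hk1 i))
    · rw [Complex.normSq_pos]
      have hcols : LinearIndependent ℂ
          (fun i => (Matrix.of fun x i' => v i' (k i') x)ᵀ i) := by
        have he : (fun i => (Matrix.of fun x i' => v i' (k i') x)ᵀ i) = g := by
          funext i
          rw [← hk2 i]
          rfl
        rw [he]
        exact hgind
      have := Matrix.linearIndependent_cols_iff_isUnit.mp hcols
      exact (Matrix.isUnit_iff_isUnit_det _ |>.mp this).ne_zero
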